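/- Let R : [0,∞) → [0,∞) be a non-increasing function and C > 0 a constant such that for every t ≥ 0 the function R is integrable on [t,∞) and ∫_t^∞ R(τ) dτ ≤ (1/C)·R(t). Then R(t) ≤ R(0)·e^{1−Ct} for all t ≥ 0. -/

import Mathlib

open MeasureTheory

/-- Lemma 2.3, case `η = 0` (Komornik): if `R : [0,∞) → [0,∞)` is non-increasing,
`C > 0`, and `∫_t^∞ R ≤ (1/C) * R t` for all `t ≥ 0`, then
`R t ≤ R 0 * exp (1 - C * t)` for all `t ≥ 0`. -/
theorem komornik_exponential_decay (R : ℝ → ℝ) (C : ℝ) (hC : 0 < C)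
    (hnonneg : ∀ t, 0 ≤ t → 0 ≤ R t)
    (hanti : ∀ s t, 0 ≤ s → s ≤ t → R t ≤ R s)
    (hint : ∀ t, 0 ≤ t → IntegrableOn R (Set.Ici t))
    (hineq : ∀ t, 0 ≤ t → (∫ τ in Set.Ici t, R τ) ≤ (1 / C) * R t) :
    ∀ t, 0 ≤ t → R t ≤ R 0 * Real.exp (1 - C * t) := by
  set E : ℝ → ℝ := fun t => ∫ τ in Set.Ici t, R τ with hE
  have hEnonneg : ∀ t, 0 ≤ t → 0 ≤ E t := fun t ht =>
    setIntegral_nonneg measurableSet_Ici fun x hx => hnonneg x (le_trans ht hx)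
  -- splitting lemma
  have hsplit : ∀ t u, 0 ≤ t → t ≤ u → E t = (∫ τ in Set.Ico t u, R τ) + E u := by
    intro t u ht htu
    have hdisj : Disjoint (Set.Ico t u) (Set.Ici u) := by
      apply Set.disjoint_left.2
      intro x hx hx'
      exact absurd hx' (not_le.2 hx.2)
    have h1 : IntegrableOn R (Set.Ico t u) :=
      (hint t ht).mono_set (fun x hx => hx.1)
    have h2 : IntegrableOn R (Set.Ici u) := hint u (le_trans ht htu)
    have := setIntegral_union hdisj measurableSet_Ici h1 h2 (f := R) (μ := volume)
    rw [Set.Ico_union_Ici_eq_Ici htu] at this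
    exact this
  -- lower bound for the slab integral
  have hslab : ∀ t u, 0 ≤ t → t ≤ u → (u - t) * R u ≤ ∫ τ in Set.Ico t u, R τ := by
    intro t u ht htu
    have h1 : IntegrableOn R (Set.Ico t u) := (hint t ht).mono_set (fun x hx => hx.1)
    have := setIntegral_ge_of_const_le (μ := volume) (c := R u) measurableSet_Ico
      (by simp [Real.volume_Ico]) (fun x hx => hanti x u (le_trans ht hx.1) hx.2.le) h1
    rw [Real.volume_real_Ico_of_le htu, smul_eq_mul] at this
    linarith
  -- step inequality: (1 + C h) * E (t + h) ≤ E t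
  have hstep : ∀ t h, 0 ≤ t → 0 ≤ h → (1 + C * h) * E (t + h) ≤ E t := by
    intro t h ht hh
    have htu : t ≤ t + h := by linarith
    have h1 := hslab t (t + h) ht htu
    have h2 := hsplit t (t + h) ht htu
    have h3 : C * E (t + h) ≤ R (t + h) := by
      have := hineq (t + h) (by linarith)
      calc C * E (t + h) ≤ C * ((1 / C) * R (t + h)) := by
            exact mul_le_mul_of_nonneg_left this hC.le
        _ = R (t + h) := by field_simp
    have : h * (C * E (t + h)) ≤ h * R (t + h) := mul_le_mul_of_nonneg_left h3 hh
    nlinarith [hEnonneg (t + h) (by linarith : (0:ℝ) ≤ t + h)]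
  -- iterate: (1 + C h)^k * E (k h) ≤ E 0
  have hiter : ∀ (h : ℝ), 0 ≤ h → ∀ k : ℕ, (1 + C * h) ^ k * E (k * h) ≤ E 0 := by
    intro h hh k
    induction k with
    | zero => simp
    | succ k ih =>
      have hkh : (0:ℝ) ≤ k * h := by positivity
      have hstep' := hstep (k * h) h hkh hh
      have hpow : (0:ℝ) ≤ (1 + C * h) ^ k := by positivity
      have : (1 + C * h) ^ k * ((1 + C * h) * E (k * h + h)) ≤ (1 + C * h) ^ k * E (k * h) :=
        mul_le_mul_of_nonneg_left hstep' hpow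
      calc (1 + C * h) ^ (k + 1) * E (↑(k + 1) * h)
          = (1 + C * h) ^ k * ((1 + C * h) * E (k * h + h)) := by
            push_cast; ring_nf
        _ ≤ (1 + C * h) ^ k * E (k * h) := this
        _ ≤ E 0 := ih
  -- main decay estimate for E
  have hEdecay : ∀ t, 0 ≤ t → E t * Real.exp (C * t) ≤ E 0 := by
    intro t ht
    have hlim : Filter.Tendsto (fun n : ℕ => E t * (1 + (C * t) / n) ^ n)
        Filter.atTop (nhds (E t * Real.exp (C * t))) :=
      (Real.tendsto_one_add_div_pow_exp (C * t)).const_mul (E t)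
    refine le_of_tendsto hlim ?_
    filter_upwards [Filter.eventually_ge_atTop 1] with n hn
    have hn' : (0:ℝ) < n := by exact_mod_cast hn
    have h := hiter (t / n) (by positivity) n
    have hnt : (n : ℝ) * (t / n) = t := by field_simp
    rw [hnt] at h
    have : C * (t / n) = (C * t) / n := by ring
    rw [this] at h
    linarith [h]
  -- conclusion
  intro t ht
  by_cases hct : C * t ≤ 1
  · have h1 : (1:ℝ) ≤ Real.exp (1 - C * t) := by
      rw [Real.one_le_exp_iff]; linarith
    have h2 : R t ≤ R 0 := hanti 0 t le_rfl ht
    nlinarith [hnonneg 0 le_rfl]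
  · push_neg at hct
    set s := t - 1 / C with hs
    have hs0 : 0 ≤ s := by
      rw [hs]
      rw [sub_nonneg, div_le_iff₀ hC]
      nlinarith
    have hst : s ≤ t := by
      rw [hs]; have : 0 < 1 / C := by positivity
      linarith
    have h1 : (t - s) * R t ≤ ∫ τ in Set.Ico s t, R τ := hslab s t hs0 hst
    have h2 : (∫ τ in Set.Ico s t, R τ) ≤ E s := by
      have := hsplit s t hs0 hst
      have := hEnonneg t ht
      linarith
    have h3 : E s * Real.exp (C * s) ≤ E 0 := hEdecay s hs0
    have h4 : E 0 ≤ (1 / C) * R 0 := hineq 0 le_rfl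
    have hts : t - s = 1 / C := by rw [hs]; ring
    have hCs : C * s = C * t - 1 := by rw [hs]; field_simp
    have hexp : Real.exp (C * s) = Real.exp (C * t - 1) := by rw [hCs]
    have hexppos : 0 < Real.exp (C * s) := Real.exp_pos _
    -- (1/C) R t ≤ E s ≤ E 0 * exp (-(C s)) ≤ (1/C) R 0 exp(1 - C t)
    have h5 : (1 / C) * R t ≤ E s := by rw [← hts]; linarith
    have h6 : E s ≤ E 0 / Real.exp (C * s) := by
      rw [le_div_iff₀ hexppos]; linarith
    have h7 : E 0 / Real.exp (C * s) ≤ (1 / C) * R 0 * Real.exp (1 - C * t) := by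
      rw [div_le_iff₀ hexppos, hexp, mul_assoc, ← Real.exp_add]
      have he : (1 : ℝ) - C * t + (C * t - 1) = 0 := by ring
      rw [he, Real.exp_zero, mul_one]
      exact h4
    have h8 : (1 / C) * R t ≤ (1 / C) * R 0 * Real.exp (1 - C * t) := by linarith
    have := mul_le_mul_of_nonneg_left h8 hC.le
    calc R t = C * ((1 / C) * R t) := by field_simp
      _ ≤ C * ((1 / C) * R 0 * Real.exp (1 - C * t)) := this
      _ = R 0 * Real.exp (1 - C * t) := by field_simp
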